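/- Let Y be an n×n complex matrix with columns y₁,…,yₙ, so that Y Y* = Σⱼ yⱼ yⱼ*. Let z ∈ ℂ with Im(z) > 0, C = Y Y* - zI, and Cⱼ = C - yⱼ yⱼ*. Then the Stieltjes transform m_n(z) = (1/n) tr(C⁻¹) satisfies z·m_n(z) = -(1/n) Σⱼ 1/(1 + yⱼ* Cⱼ⁻¹ yⱼ). -/
import Mathlib


open Matrix Complex

lemma herm_shift_invertible {n : ℕ} (H : Matrix (Fin n) (Fin n) ℂ) (hH : H.IsHermitian)
    (z : ℂ) (hz : z.im ≠ 0) : IsUnit (H - z • (1 : Matrix (Fin n) (Fin n) ℂ)).det := by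
  by_contra h
  rw [isUnit_iff_ne_zero, not_not, ← Matrix.exists_mulVec_eq_zero_iff] at h
  obtain ⟨v, hv, hmv⟩ := h
  have hdot : star v ⬝ᵥ (H - z • 1).mulVec v = 0 := by rw [hmv, dotProduct_zero]
  rw [sub_mulVec, dotProduct_sub, smul_mulVec, one_mulVec, dotProduct_smul,
    sub_eq_zero] at hdot
  have hreal : star v ⬝ᵥ H *ᵥ v = star (star v ⬝ᵥ H *ᵥ v) := by
    conv_lhs => rw [star_dotProduct]
    congr 1
    rw [star_mulVec, ← dotProduct_mulVec, hH.eq]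
  have him : (star v ⬝ᵥ H *ᵥ v).im = 0 := by
    have := congrArg Complex.im hreal
    simp only [Complex.star_def, Complex.conj_im] at this
    linarith
  have h1 : star v ⬝ᵥ v = ((∑ i, Complex.normSq (v i) : ℝ) : ℂ) := by
    push_cast
    simp [dotProduct, Complex.normSq_eq_conj_mul_self]
  have hS : 0 < ∑ i, Complex.normSq (v i) := by
    have : ∃ i, v i ≠ 0 := by
      by_contra hc
      push_neg at hc
      exact hv (funext hc)
    obtain ⟨i, hi⟩ := this
    exact Finset.sum_pos' (fun j _ => Complex.normSq_nonneg _)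
      ⟨i, Finset.mem_univ i, Complex.normSq_pos.2 hi⟩
  rw [h1] at hdot
  have := congrArg Complex.im hdot
  simp only [smul_eq_mul, Complex.mul_im, Complex.ofReal_re, Complex.ofReal_im, mul_zero,
    add_zero, him] at this
  rw [zero_add] at this
  rcases mul_eq_zero.1 this.symm with h' | h'
  · exact hz h'
  · linarith


lemma vecMulVec_mulVec' {n : ℕ} (u w x : Fin n → ℂ) :
    (vecMulVec u w) *ᵥ x = (w ⬝ᵥ x) • u := by
  ext i
  simp only [mulVec, vecMulVec_apply, dotProduct, Pi.smul_apply, smul_eq_mul,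
    Finset.sum_mul]
  congr 1; ext k; ring

lemma trace_vecMulVec_mul {n : ℕ} (u w : Fin n → ℂ) (A : Matrix (Fin n) (Fin n) ℂ) :
    trace (vecMulVec u w * A) = w ⬝ᵥ A *ᵥ u := by
  simp only [trace, diag, mul_apply, vecMulVec_apply, mulVec, dotProduct]
  rw [Finset.sum_comm]
  congr 1; ext k
  rw [Finset.mul_sum]
  congr 1; ext i; ring

lemma sum_vecMulVec {n : ℕ} (Y : Matrix (Fin n) (Fin n) ℂ) :
    Y * Yᴴ = ∑ j, vecMulVec (fun i => Y i j) (star (fun i => Y i j)) := by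
  ext i k
  simp [mul_apply, vecMulVec_apply, conjTranspose_apply, Finset.sum_apply, Matrix.sum_apply]

lemma isHermitian_vecMulVec_star {n : ℕ} (u : Fin n → ℂ) :
    (vecMulVec u (star u)).IsHermitian := by
  ext i k
  simp [conjTranspose_apply, vecMulVec_apply, mul_comm]

/-- With `C = Y Yᴴ - z•1` and `Cⱼ = C - yⱼ yⱼᴴ` (where `yⱼ` is the `j`-th column of `Y`),
the Stieltjes transform `m_n(z) = (1/n) tr C⁻¹` satisfies
`z m_n(z) = -(1/n) Σⱼ 1/(1 + yⱼᴴ Cⱼ⁻¹ yⱼ)`. -/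
theorem stieltjes_column_decomposition (n : ℕ) (Y : Matrix (Fin n) (Fin n) ℂ)
    (z : ℂ) (hz : 0 < z.im) :
    z * ((n : ℂ)⁻¹ * Matrix.trace ((Y * Yᴴ - z • (1 : Matrix (Fin n) (Fin n) ℂ))⁻¹))
      = -((n : ℂ)⁻¹ * ∑ j, (1 + star (fun i => Y i j) ⬝ᵥ
          ((Y * Yᴴ - z • (1 : Matrix (Fin n) (Fin n) ℂ)
            - vecMulVec (fun i => Y i j) (star (fun i => Y i j)))⁻¹).mulVec
              (fun i => Y i j))⁻¹) := by
  set y : Fin n → Fin n → ℂ := fun j i => Y i j with hy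
  set C : Matrix (Fin n) (Fin n) ℂ := Y * Yᴴ - z • 1 with hCdef
  have hznim : z.im ≠ 0 := ne_of_gt hz
  have hC : IsUnit C.det :=
    herm_shift_invertible _ (isHermitian_mul_conjTranspose_self Y) z hznim
  set Cj : Fin n → Matrix (Fin n) (Fin n) ℂ :=
    fun j => C - vecMulVec (y j) (star (y j)) with hCjdef
  have hCj : ∀ j, IsUnit (Cj j).det := by
    intro j
    have h : Cj j = (Y * Yᴴ - vecMulVec (y j) (star (y j))) - z • 1 := by
      rw [hCjdef, hCdef, sub_right_comm]
    rw [h]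
    exact herm_shift_invertible _
      ((isHermitian_mul_conjTranspose_self Y).sub (isHermitian_vecMulVec_star _)) z hznim
  set α : Fin n → ℂ := fun j => star (y j) ⬝ᵥ (Cj j)⁻¹ *ᵥ (y j) with hα
  set β : Fin n → ℂ := fun j => star (y j) ⬝ᵥ C⁻¹ *ᵥ (y j) with hβ
  have key1 : ∀ j, (Cj j)⁻¹ *ᵥ (y j) = (1 + α j) • (C⁻¹ *ᵥ (y j)) := by
    intro j
    have h1 : C *ᵥ ((Cj j)⁻¹ *ᵥ (y j)) = (1 + α j) • (y j) := by
      have hC' : C = Cj j + vecMulVec (y j) (star (y j)) := by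
        rw [hCjdef]
        exact (sub_add_cancel _ _).symm
      rw [hC', add_mulVec, mulVec_mulVec, mul_nonsing_inv _ (hCj j), one_mulVec,
        vecMulVec_mulVec', add_smul, one_smul]
    calc (Cj j)⁻¹ *ᵥ (y j) = C⁻¹ *ᵥ (C *ᵥ ((Cj j)⁻¹ *ᵥ (y j))) := by
          rw [mulVec_mulVec, nonsing_inv_mul _ hC, one_mulVec]
      _ = (1 + α j) • (C⁻¹ *ᵥ (y j)) := by rw [h1, mulVec_smul]
  have key2 : ∀ j, α j = (1 + α j) * β j := by
    intro j
    calc α j = star (y j) ⬝ᵥ (Cj j)⁻¹ *ᵥ (y j) := rfl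
      _ = star (y j) ⬝ᵥ (1 + α j) • (C⁻¹ *ᵥ (y j)) := by rw [key1 j]
      _ = (1 + α j) * β j := by rw [dotProduct_smul]; rfl
  have hne : ∀ j, 1 + α j ≠ 0 := by
    intro j h0
    have := key2 j
    rw [h0, zero_mul] at this
    rw [this] at h0
    simpa using h0
  have keyβ : ∀ j, β j = 1 - (1 + α j)⁻¹ := by
    intro j
    have h := key2 j
    field_simp [hne j]
    linear_combination -h
  -- trace identity
  have htr : trace (Y * Yᴴ * C⁻¹) = (n : ℂ) + z * trace C⁻¹ := by
    have h1 : (Y * Yᴴ) * C⁻¹ - z • C⁻¹ = 1 := by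
      have := mul_nonsing_inv _ hC
      rw [hCdef] at this ⊢
      rw [sub_mul, smul_mul_assoc, one_mul] at this
      exact this
    have h2 := congrArg trace h1
    rw [trace_sub, trace_smul, trace_one] at h2
    have : trace (Y * Yᴴ * C⁻¹) - z * trace C⁻¹ = (n : ℂ) := by
      simpa [Finset.card_univ] using h2
    linear_combination this
  have htr2 : trace (Y * Yᴴ * C⁻¹) = ∑ j, β j := by
    conv_lhs => rw [sum_vecMulVec]
    rw [Finset.sum_mul, trace_sum]
    exact Finset.sum_congr rfl fun j _ => trace_vecMulVec_mul _ _ _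
  have hsum : ∑ j, β j = (n : ℂ) - ∑ j, (1 + α j)⁻¹ := by
    rw [Finset.sum_congr rfl (fun j _ => keyβ j), Finset.sum_sub_distrib,
      Finset.sum_const, Finset.card_univ, Fintype.card_fin, nsmul_eq_mul, mul_one]
  have hz2 : z * trace C⁻¹ = -∑ j, (1 + α j)⁻¹ := by
    have h := htr.symm.trans htr2
    rw [hsum] at h
    linear_combination h
  have final : z * ((n : ℂ)⁻¹ * trace C⁻¹) = -((n : ℂ)⁻¹ * ∑ j, (1 + α j)⁻¹) := by
    calc z * ((n : ℂ)⁻¹ * trace C⁻¹) = (n : ℂ)⁻¹ * (z * trace C⁻¹) := by ring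
      _ = -((n : ℂ)⁻¹ * ∑ j, (1 + α j)⁻¹) := by rw [hz2]; ring
  exact final
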